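/- Fix η > 0 and τ ∈ (0,1), and let p(s) = −(ητ²/2)·(s − 2/(ητ²))·(s − 2/η)·(s + 2η). Let z be the maximal solution of the ODE 8z'' = p'(z) with z(0) = 2/η and z'(0) = 0. Then z is defined on all of ℝ and satisfies: (i) 4·z'(y)² = p(z(y)) for all y ∈ ℝ; (ii) 2/η ≤ z(y) ≤ 2/(ητ²) for all y ∈ ℝ; (iii) z(−y) = z(y) for all y ∈ ℝ; (iv) the integral ϑ = ∫_{2/η}^{2/(ητ²)} 2/√(p(s)) ds is finite and positive, z is strictly increasing on [0,ϑ] with z(ϑ) = 2/(ητ²), and z(kϑ + y) = z(kϑ − y) for all y ∈ ℝ and all integers k; in particular z is periodic with period 2ϑ. -/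

import Mathlib

open Set MeasureTheory intervalIntegral

namespace CFODE

noncomputable def pp (η τ : ℝ) : ℝ → ℝ :=
  fun s => -(η * τ ^ 2 / 2) * (s - 2 / (η * τ ^ 2)) * (s - 2 / η) * (s + 2 * η)

noncomputable def ppd (η τ : ℝ) : ℝ → ℝ :=
  fun s => -(η * τ ^ 2 / 2) *
    ((s - 2 / η) * (s + 2 * η) + (s - 2 / (η * τ ^ 2)) * (s + 2 * η)
      + (s - 2 / (η * τ ^ 2)) * (s - 2 / η))

noncomputable def FF (η τ : ℝ) : ℝ → ℝ :=
  fun s => if 2 / η < s ∧ s < 2 / (η * τ ^ 2) then 2 / Real.sqrt (pp η τ s) else 1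

noncomputable def GG (η τ : ℝ) : ℝ → ℝ := fun x => ∫ s in (2 / η)..x, FF η τ s

noncomputable def zhat (η τ : ℝ) : ℝ → ℝ := Function.invFun (GG η τ)

noncomputable def TT (η τ : ℝ) : ℝ := GG η τ (2 / (η * τ ^ 2))

section
variable {η τ : ℝ}

lemma A_pos (hη : 0 < η) : (0:ℝ) < 2 / η := by positivity

lemma A_lt_C (hη : 0 < η) (hτ0 : 0 < τ) (hτ1 : τ < 1) : 2 / η < 2 / (η * τ ^ 2) := by
  apply div_lt_div_of_pos_left (by norm_num) (by positivity)
  nlinarith [mul_lt_mul_of_pos_left (show τ ^ 2 < 1 by nlinarith) hη]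

lemma pp_cont : Continuous (pp η τ) := by unfold pp; fun_prop

lemma ppd_cont : Continuous (ppd η τ) := by unfold ppd; fun_prop

lemma pp_eq (s : ℝ) :
    pp η τ s = η * τ ^ 2 / 2 * ((2 / (η * τ ^ 2) - s) * ((s - 2 / η) * (s + 2 * η))) := by
  unfold pp; ring

lemma pp_pos (hη : 0 < η) (hτ0 : 0 < τ) {s : ℝ} (h1 : 2 / η < s) (h2 : s < 2 / (η * τ ^ 2)) : 0 < pp η τ s := by
  have hA := A_pos (η := η) hη
  rw [pp_eq]
  have : 0 < s + 2 * η := by linarith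
  apply mul_pos (by positivity)
  apply mul_pos (by linarith)
  exact mul_pos (by linarith) this

lemma pp_nonneg (hη : 0 < η) (hτ0 : 0 < τ) {s : ℝ} (h1 : 2 / η ≤ s) (h2 : s ≤ 2 / (η * τ ^ 2)) : 0 ≤ pp η τ s := by
  have hA := A_pos (η := η) hη
  rw [pp_eq]
  have : 0 ≤ s + 2 * η := by linarith
  apply mul_nonneg (by positivity)
  apply mul_nonneg (by linarith)
  exact mul_nonneg (by linarith) this

lemma pp_rootA : pp η τ (2 / η) = 0 := by unfold pp; ring

lemma pp_rootC : pp η τ (2 / (η * τ ^ 2)) = 0 := by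
  unfold pp; rw [sub_self]; ring

lemma pp_hasDeriv (s : ℝ) : HasDerivAt (pp η τ) (ppd η τ s) s := by
  have h1 : HasDerivAt (fun s : ℝ => (s - 2 / (η * τ ^ 2)) * (s - 2 / η))
      ((s - 2 / η) + (s - 2 / (η * τ ^ 2))) s := by
    simpa using ((hasDerivAt_id s).sub_const (2 / (η * τ ^ 2))).fun_mul
      ((hasDerivAt_id s).sub_const (2 / η))
  have h2 := h1.fun_mul ((hasDerivAt_id s).add_const (2 * η))
  have h3 := h2.const_mul (-(η * τ ^ 2 / 2))
  have hfun : pp η τ = fun s : ℝ =>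
      -(η * τ ^ 2 / 2) * ((s - 2 / (η * τ ^ 2)) * (s - 2 / η) * (s + 2 * η)) := by
    funext s; unfold pp; ring
  rw [hfun]
  refine h3.congr_deriv ?_
  unfold ppd; simp only [id_eq]; ring



lemma norm_two_div_sqrt (x : ℝ) : ‖2 / Real.sqrt x‖ = 2 / Real.sqrt x :=
  Real.norm_of_nonneg (by positivity)

lemma two_div_sqrt_le {K u x : ℝ} (hK : 0 < K) (hu : 0 < u) (hx : K * u ≤ x) :
    2 / Real.sqrt x ≤ 2 / Real.sqrt K * u ^ (-(1:ℝ)/2) := by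
  have hKu : 0 < K * u := mul_pos hK hu
  have h1 : Real.sqrt (K * u) ≤ Real.sqrt x := Real.sqrt_le_sqrt hx
  have h2 : Real.sqrt (K * u) = Real.sqrt K * Real.sqrt u := Real.sqrt_mul hK.le u
  have h3 : 0 < Real.sqrt (K * u) := Real.sqrt_pos.2 hKu
  have h4 : 2 / Real.sqrt x ≤ 2 / (Real.sqrt K * Real.sqrt u) := by
    rw [← h2]; gcongr
  refine h4.trans_eq ?_
  rw [div_mul_eq_div_div]
  congr 1
  rw [show (-(1:ℝ)/2) = -(1/2) by norm_num, Real.rpow_neg hu.le,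
    ← Real.sqrt_eq_rpow, div_eq_mul_inv]

lemma sqrt_singular_integrable_left {A M K : ℝ} (hAM : A ≤ M) (hK : 0 < K)
    (f : ℝ → ℝ) (hmeas : Measurable f)
    (hbound : ∀ s ∈ Ioc A M, K * (s - A) ≤ f s) :
    IntegrableOn (fun s => 2 / Real.sqrt (f s)) (Ioc A M) volume := by
  have h1 : IntervalIntegrable (fun x : ℝ => x ^ (-(1:ℝ)/2)) volume 0 (M - A) :=
    intervalIntegral.intervalIntegrable_rpow' (by norm_num)
  have h2 := h1.comp_sub_right A
  rw [zero_add, sub_add_cancel] at h2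
  have hg : IntegrableOn (fun s : ℝ => 2 / Real.sqrt K * (s - A) ^ (-(1:ℝ)/2)) (Ioc A M) volume :=
    (intervalIntegrable_iff_integrableOn_Ioc_of_le hAM).mp (h2.const_mul _)
  refine hg.integrable.mono' ?_ ?_
  · exact (measurable_const.div ((Real.continuous_sqrt.measurable).comp hmeas)).aestronglyMeasurable
  · rw [ae_restrict_iff' measurableSet_Ioc]
    filter_upwards with s hs
    rw [norm_two_div_sqrt]
    exact two_div_sqrt_le hK (by linarith [hs.1]) (hbound s hs)

lemma sqrt_singular_integrable_right {M C K : ℝ} (hMC : M ≤ C) (hK : 0 < K)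
    (f : ℝ → ℝ) (hmeas : Measurable f) (hfC : f C = 0)
    (hbound : ∀ s ∈ Ioo M C, K * (C - s) ≤ f s) :
    IntegrableOn (fun s => 2 / Real.sqrt (f s)) (Ioc M C) volume := by
  have h1 : IntervalIntegrable (fun x : ℝ => x ^ (-(1:ℝ)/2)) volume 0 (C - M) :=
    intervalIntegral.intervalIntegrable_rpow' (by norm_num)
  have h2 := h1.comp_sub_left C
  rw [sub_zero, sub_sub_cancel] at h2
  have hg : IntegrableOn (fun s : ℝ => 2 / Real.sqrt K * (C - s) ^ (-(1:ℝ)/2)) (Ioc M C) volume :=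
    (intervalIntegrable_iff_integrableOn_Ioc_of_le hMC).mp ((h2.symm).const_mul _)
  refine hg.integrable.mono' ?_ ?_
  · exact (measurable_const.div ((Real.continuous_sqrt.measurable).comp hmeas)).aestronglyMeasurable
  · rw [ae_restrict_iff' measurableSet_Ioc]
    filter_upwards with s hs
    rw [norm_two_div_sqrt]
    rcases eq_or_lt_of_le hs.2 with h | h
    · rw [h, hfC, Real.sqrt_zero, div_zero, sub_self, Real.zero_rpow (by norm_num), mul_zero]
    · exact two_div_sqrt_le hK (by linarith) (hbound s ⟨hs.1, h⟩)


lemma mul3_le {l u1 u2 u3 v1 v2 v3 : ℝ} (hl : 0 ≤ l) (h1 : 0 ≤ u1) (h2 : 0 ≤ u2) (h3 : 0 ≤ u3)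
    (e1 : u1 ≤ v1) (e2 : u2 ≤ v2) (e3 : u3 ≤ v3) : l*(u1*(u2*u3)) ≤ l*(v1*(v2*v3)) := by
  have A : u2*u3 ≤ v2*v3 := mul_le_mul e2 e3 h3 (le_trans h2 e2)
  have B : u1*(u2*u3) ≤ v1*(v2*v3) :=
    mul_le_mul e1 A (mul_nonneg h2 h3) (le_trans h1 e1)
  exact mul_le_mul_of_nonneg_left B hl

lemma pp_lower_left (hη : 0 < η) (hτ0 : 0 < τ) (hτ1 : τ < 1) :
    ∀ s ∈ Ioc (2/η) ((2/η + 2/(η*τ^2))/2),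
      (η * τ ^ 2 / 2 * ((2/(η*τ^2) - 2/η)/2) * (2/η + 2*η)) * (s - 2/η) ≤ pp η τ s := by
  intro s hs
  have hAC := A_lt_C (η := η) (τ := τ) hη hτ0 hτ1
  have hA := A_pos (η := η) hη
  rw [pp_eq]
  have h1 : 0 < s - 2/η := by linarith [hs.1]
  have heq : (η * τ ^ 2 / 2 * ((2/(η*τ^2) - 2/η)/2) * (2/η + 2*η)) * (s - 2/η)
      = η * τ ^ 2 / 2 * (((2/(η*τ^2) - 2/η)/2) * ((s - 2/η) * (2/η + 2*η))) := by ring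
  rw [heq]
  exact mul3_le (by positivity) (by linarith) (by linarith) (by positivity)
    (by linarith [hs.2]) le_rfl (by linarith [hs.1])

lemma pp_lower_right (hη : 0 < η) (hτ0 : 0 < τ) (hτ1 : τ < 1) :
    ∀ s ∈ Ioo ((2/η + 2/(η*τ^2))/2) (2/(η*τ^2)),
      (η * τ ^ 2 / 2 * ((2/(η*τ^2) - 2/η)/2) * (2/η + 2*η)) * (2/(η*τ^2) - s) ≤ pp η τ s := by
  intro s hs
  have hAC := A_lt_C (η := η) (τ := τ) hη hτ0 hτ1
  have hA := A_pos (η := η) hη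
  rw [pp_eq]
  have heq : (η * τ ^ 2 / 2 * ((2/(η*τ^2) - 2/η)/2) * (2/η + 2*η)) * (2/(η*τ^2) - s)
      = η * τ ^ 2 / 2 * ((2/(η*τ^2) - s) * (((2/(η*τ^2) - 2/η)/2) * (2/η + 2*η))) := by ring
  rw [heq]
  have heq2 : η * τ ^ 2 / 2 * ((2/(η*τ^2) - s) * (((2/(η*τ^2) - 2/η)/2) * (2/η + 2*η)))
      = η * τ ^ 2 / 2 * (((2/(η*τ^2) - 2/η)/2) * ((2/(η*τ^2) - s) * (2/η + 2*η))) := by ring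
  have heq3 : η * τ ^ 2 / 2 * ((2/(η*τ^2) - s) * ((s - 2/η) * (s + 2*η)))
      = η * τ ^ 2 / 2 * ((s - 2/η) * ((2/(η*τ^2) - s) * (s + 2*η))) := by ring
  rw [heq2, heq3]
  exact mul3_le (by positivity) (by linarith [hs.2]) (by linarith [hs.2]) (by positivity)
    (by linarith [hs.1]) le_rfl (by linarith [hs.1])

lemma f0_intOn (hη : 0 < η) (hτ0 : 0 < τ) (hτ1 : τ < 1) :
    IntegrableOn (fun s => 2 / Real.sqrt (pp η τ s)) (Ioc (2/η) (2/(η*τ^2))) volume := by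
  have hAC := A_lt_C (η := η) (τ := τ) hη hτ0 hτ1
  have hA := A_pos (η := η) hη
  have hK : 0 < η * τ ^ 2 / 2 * ((2/(η*τ^2) - 2/η)/2) * (2/η + 2*η) := by
    have : 0 < 2/(η*τ^2) - 2/η := by linarith
    positivity
  have hmeas : Measurable (pp η τ) := (pp_cont (η := η) (τ := τ)).measurable
  have hleft := sqrt_singular_integrable_left (by linarith : 2/η ≤ (2/η + 2/(η*τ^2))/2)
    hK (pp η τ) hmeas (pp_lower_left hη hτ0 hτ1)
  have hright := sqrt_singular_integrable_right (by linarith : (2/η + 2/(η*τ^2))/2 ≤ 2/(η*τ^2))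
    hK (pp η τ) hmeas (pp_rootC (η := η) (τ := τ)) (pp_lower_right hη hτ0 hτ1)
  have := hleft.union hright
  rwa [Ioc_union_Ioc_eq_Ioc (by linarith) (by linarith)] at this

lemma f0_intInt (hη : 0 < η) (hτ0 : 0 < τ) (hτ1 : τ < 1) :
    IntervalIntegrable (fun s => 2 / Real.sqrt (pp η τ s)) volume (2/η) (2/(η*τ^2)) :=
  (intervalIntegrable_iff_integrableOn_Ioc_of_le
    (A_lt_C (η := η) (τ := τ) hη hτ0 hτ1).le).mpr (f0_intOn hη hτ0 hτ1)

lemma FF_pos (hη : 0 < η) (hτ0 : 0 < τ) : ∀ s, 0 < FF η τ s := by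
  intro s
  unfold FF
  split
  · next h => exact div_pos two_pos (Real.sqrt_pos.2 (pp_pos hη hτ0 h.1 h.2))
  · exact one_pos

lemma FF_meas : Measurable (FF η τ) := by
  unfold FF
  exact Measurable.ite
    (by
      have : {s : ℝ | 2 / η < s ∧ s < 2 / (η * τ ^ 2)} = Ioo (2/η) (2/(η*τ^2)) := rfl
      rw [this]; exact measurableSet_Ioo)
    (measurable_const.div (Real.continuous_sqrt.measurable.comp
      (pp_cont (η := η) (τ := τ)).measurable))
    measurable_const

lemma ae_ne (c : ℝ) : ∀ᵐ x : ℝ ∂volume, x ≠ c := by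
  rw [MeasureTheory.ae_iff]
  have : {x : ℝ | ¬ x ≠ c} = {c} := by ext x; simp
  rw [this]
  exact measure_singleton c

lemma FF_intInt (hη : 0 < η) (hτ0 : 0 < τ) (hτ1 : τ < 1) :
    ∀ u v : ℝ, IntervalIntegrable (FF η τ) volume u v := by
  have key : ∀ u v : ℝ, u ≤ v → IntervalIntegrable (FF η τ) volume u v := by
    intro u v huv
    rw [intervalIntegrable_iff_integrableOn_Ioc_of_le huv]
    have p1 : IntegrableOn (FF η τ) (Ioc u v ∩ Iic (2/η)) volume := by
      apply IntegrableOn.congr_fun (f := fun _ => (1:ℝ))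
      · exact integrableOn_const (lt_of_le_of_lt
          (measure_mono inter_subset_left) measure_Ioc_lt_top).ne
      · intro x hx
        unfold FF
        rw [if_neg]
        rintro ⟨h1, -⟩
        exact absurd (lt_of_lt_of_le h1 hx.2) (lt_irrefl _)
      · exact measurableSet_Ioc.inter measurableSet_Iic
    have p2 : IntegrableOn (FF η τ) (Ioc (2/η) (2/(η*τ^2))) volume := by
      apply (f0_intOn hη hτ0 hτ1).congr_fun_ae
      have h1 := ae_restrict_mem (μ := volume) (measurableSet_Ioc (a := 2/η) (b := 2/(η*τ^2)))
      have h2 : ∀ᵐ x : ℝ ∂(volume.restrict (Ioc (2/η) (2/(η*τ^2)))), x ≠ 2/(η*τ^2) :=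
        (ae_ne (2/(η*τ^2))).filter_mono (MeasureTheory.ae_mono Measure.restrict_le_self)
      filter_upwards [h1, h2] with x hx hne
      unfold FF
      rw [if_pos ⟨hx.1, lt_of_le_of_ne hx.2 hne⟩]
    have p3 : IntegrableOn (FF η τ) (Ioc u v ∩ Ici (2/(η*τ^2))) volume := by
      apply IntegrableOn.congr_fun (f := fun _ => (1:ℝ))
      · exact integrableOn_const (lt_of_le_of_lt
          (measure_mono inter_subset_left) measure_Ioc_lt_top).ne
      · intro x hx
        unfold FF
        rw [if_neg]
        rintro ⟨-, h2⟩
        exact absurd (lt_of_le_of_lt hx.2 h2) (lt_irrefl _)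
      · exact measurableSet_Ioc.inter measurableSet_Ici
    refine ((p1.union p2).union p3).mono_set ?_
    intro x hx
    rcases le_or_gt x (2/η) with h | h
    · exact Or.inl (Or.inl ⟨hx, h⟩)
    · rcases le_or_gt x (2/(η*τ^2)) with h2 | h2
      · exact Or.inl (Or.inr ⟨h, h2⟩)
      · exact Or.inr ⟨hx, h2.le⟩
  intro u v
  rcases le_total u v with h | h
  · exact key u v h
  · exact (key v u h).symm

lemma GG_cont (hη : 0 < η) (hτ0 : 0 < τ) (hτ1 : τ < 1) : Continuous (GG η τ) :=
  intervalIntegral.continuous_primitive (FF_intInt hη hτ0 hτ1) _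

lemma GG_strictMono (hη : 0 < η) (hτ0 : 0 < τ) (hτ1 : τ < 1) : StrictMono (GG η τ) := by
  intro u v huv
  have hpos := intervalIntegral.intervalIntegral_pos_of_pos (FF_intInt hη hτ0 hτ1 u v)
    (FF_pos hη hτ0) huv
  have hadd := intervalIntegral.integral_add_adjacent_intervals
    (FF_intInt hη hτ0 hτ1 (2/η) u) (FF_intInt hη hτ0 hτ1 u v)
  unfold GG
  linarith [hadd]

lemma GG_eq_above (hη : 0 < η) (hτ0 : 0 < τ) (hτ1 : τ < 1) :
    ∀ y, 2/(η*τ^2) ≤ y → GG η τ y = TT η τ + (y - 2/(η*τ^2)) := by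
  intro y hy
  have hone : ∫ s in (2/(η*τ^2))..y, FF η τ s = y - 2/(η*τ^2) := by
    rw [intervalIntegral.integral_congr (g := fun _ => (1:ℝ))]
    · simp
    · intro s hs
      rw [uIcc_of_le hy] at hs
      unfold FF
      rw [if_neg]
      rintro ⟨-, h2⟩
      exact absurd (lt_of_le_of_lt hs.1 h2) (lt_irrefl _)
  have hadd := intervalIntegral.integral_add_adjacent_intervals
    (FF_intInt hη hτ0 hτ1 (2/η) (2/(η*τ^2))) (FF_intInt hη hτ0 hτ1 (2/(η*τ^2)) y)
  simp only [TT, GG] at *;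
  linarith [hadd, hone]

lemma GG_eq_below (hη : 0 < η) (hτ0 : 0 < τ) (hτ1 : τ < 1) :
    ∀ y, y ≤ 2/η → GG η τ y = y - 2/η := by
  intro y hy
  have hone : ∫ s in y..(2/η), FF η τ s = 2/η - y := by
    rw [intervalIntegral.integral_congr (g := fun _ => (1:ℝ))]
    · simp
    · intro s hs
      rw [uIcc_of_le hy] at hs
      unfold FF
      rw [if_neg]
      rintro ⟨h1, -⟩
      exact absurd (lt_of_lt_of_le h1 hs.2) (lt_irrefl _)
  have hadd := intervalIntegral.integral_add_adjacent_intervals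
    (FF_intInt hη hτ0 hτ1 (2/η) y) (FF_intInt hη hτ0 hτ1 y (2/η))
  unfold GG
  have hsame : ∫ s in (2/η)..(2/η), FF η τ s = 0 := intervalIntegral.integral_same
  linarith [hadd, hone, hsame]

lemma GG_surj (hη : 0 < η) (hτ0 : 0 < τ) (hτ1 : τ < 1) : Function.Surjective (GG η τ) := by
  apply Continuous.surjective (GG_cont hη hτ0 hτ1)
  · apply Filter.Tendsto.congr' (f₁ := fun y => TT η τ + (y - 2/(η*τ^2)))
    · filter_upwards [Filter.eventually_ge_atTop (2/(η*τ^2))] with y hy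
      exact (GG_eq_above hη hτ0 hτ1 y hy).symm
    · exact Filter.tendsto_atTop_add_const_left _ _
        (Filter.tendsto_atTop_add_const_right _ _ Filter.tendsto_id)
  · apply Filter.Tendsto.congr' (f₁ := fun y => y - 2/η)
    · filter_upwards [Filter.eventually_le_atBot (2/η)] with y hy
      exact (GG_eq_below hη hτ0 hτ1 y hy).symm
    · exact Filter.tendsto_atBot_add_const_right _ _ Filter.tendsto_id
lemma zhat_right (hη : 0 < η) (hτ0 : 0 < τ) (hτ1 : τ < 1) :
    ∀ t, GG η τ (zhat η τ t) = t :=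
  Function.rightInverse_invFun (GG_surj hη hτ0 hτ1)

lemma zhat_left (hη : 0 < η) (hτ0 : 0 < τ) (hτ1 : τ < 1) :
    ∀ x, zhat η τ (GG η τ x) = x :=
  Function.leftInverse_invFun (GG_strictMono hη hτ0 hτ1).injective

lemma zhat_strictMono (hη : 0 < η) (hτ0 : 0 < τ) (hτ1 : τ < 1) : StrictMono (zhat η τ) := by
  intro t t' h
  by_contra hle
  push_neg at hle
  have := (GG_strictMono hη hτ0 hτ1).monotone hle
  rw [zhat_right hη hτ0 hτ1, zhat_right hη hτ0 hτ1] at this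
  linarith

lemma zhat_surj (hη : 0 < η) (hτ0 : 0 < τ) (hτ1 : τ < 1) : Function.Surjective (zhat η τ) :=
  fun x => ⟨GG η τ x, zhat_left hη hτ0 hτ1 x⟩

lemma zhat_cont (hη : 0 < η) (hτ0 : 0 < τ) (hτ1 : τ < 1) : Continuous (zhat η τ) :=
  (zhat_strictMono hη hτ0 hτ1).monotone.continuous_of_surjective (zhat_surj hη hτ0 hτ1)

lemma GG_A : GG η τ (2/η) = 0 := intervalIntegral.integral_same

lemma zhat_zero (hη : 0 < η) (hτ0 : 0 < τ) (hτ1 : τ < 1) : zhat η τ 0 = 2/η := by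
  rw [← GG_A (η := η) (τ := τ)]
  exact zhat_left hη hτ0 hτ1 _

lemma zhat_TT (hη : 0 < η) (hτ0 : 0 < τ) (hτ1 : τ < 1) : zhat η τ (TT η τ) = 2/(η*τ^2) :=
  zhat_left hη hτ0 hτ1 _

lemma TT_pos (hη : 0 < η) (hτ0 : 0 < τ) (hτ1 : τ < 1) : 0 < TT η τ := by
  have := GG_strictMono hη hτ0 hτ1 (A_lt_C hη hτ0 hτ1)
  rw [GG_A] at this
  exact this

lemma TT_eq (hη : 0 < η) (hτ0 : 0 < τ) (hτ1 : τ < 1) :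
    TT η τ = ∫ s in (2/η)..(2/(η*τ^2)), 2 / Real.sqrt (pp η τ s) := by
  apply intervalIntegral.integral_congr_ae
  filter_upwards [ae_ne (2/(η*τ^2))] with x hne hx
  rw [uIoc_of_le (A_lt_C hη hτ0 hτ1).le] at hx
  unfold FF
  rw [if_pos ⟨hx.1, lt_of_le_of_ne hx.2 hne⟩]

lemma zhat_deriv (hη : 0 < η) (hτ0 : 0 < τ) (hτ1 : τ < 1) :
    ∀ t, 0 < t → t < TT η τ →
      HasDerivAt (zhat η τ) (Real.sqrt (pp η τ (zhat η τ t)) / 2) t := by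
  intro t ht0 htT
  set x := zhat η τ t with hx
  have hxA : 2/η < x := by
    rw [← zhat_zero hη hτ0 hτ1]; exact zhat_strictMono hη hτ0 hτ1 ht0
  have hxC : x < 2/(η*τ^2) := by
    rw [← zhat_TT hη hτ0 hτ1]; exact zhat_strictMono hη hτ0 hτ1 htT
  have hpx : 0 < pp η τ x := pp_pos hη hτ0 hxA hxC
  have hFx : FF η τ x = 2 / Real.sqrt (pp η τ x) := if_pos ⟨hxA, hxC⟩
  have hcont : ContinuousAt (FF η τ) x := by
    have hev : FF η τ =ᶠ[nhds x] (fun s => 2 / Real.sqrt (pp η τ s)) := by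
      filter_upwards [isOpen_Ioo.mem_nhds (show x ∈ Ioo (2/η) (2/(η*τ^2)) from ⟨hxA, hxC⟩)]
        with s hs
      exact if_pos ⟨hs.1, hs.2⟩
    apply ContinuousAt.congr _ hev.symm
    exact ContinuousAt.div continuousAt_const
      ((Real.continuous_sqrt.comp (pp_cont (η := η) (τ := τ))).continuousAt)
      (Real.sqrt_pos.2 hpx).ne'
  have hG : HasDerivAt (GG η τ) (FF η τ x) x :=
    intervalIntegral.integral_hasDerivAt_right (FF_intInt hη hτ0 hτ1 _ _)
      ⟨univ, Filter.univ_mem,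
        ((FF_meas (η := η) (τ := τ)).aestronglyMeasurable).restrict⟩ hcont
  have hne : FF η τ x ≠ 0 := (FF_pos hη hτ0 x).ne'
  have hinv := HasDerivAt.of_local_left_inverse (f := GG η τ) (g := zhat η τ) (a := t)
    ((zhat_cont hη hτ0 hτ1).continuousAt) hG hne
    (Filter.Eventually.of_forall (zhat_right hη hτ0 hτ1))
  have : (FF η τ x)⁻¹ = Real.sqrt (pp η τ x) / 2 := by
    rw [hFx, inv_div]
  rwa [this] at hinv

end

noncomputable def qq (η τ : ℝ) : ℝ → ℝ :=
  fun y => TT η τ * (1 - |2 * Int.fract (y / (2 * TT η τ)) - 1|)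

noncomputable def eps (η τ : ℝ) : ℝ → ℝ :=
  fun y => if Int.fract (y / (2 * TT η τ)) ≤ 1/2 then 1 else -1

noncomputable def zz (η τ : ℝ) : ℝ → ℝ := fun y => zhat η τ (qq η τ y)

noncomputable def zd (η τ : ℝ) : ℝ → ℝ :=
  fun y => eps η τ y * Real.sqrt (pp η τ (zz η τ y)) / 2

section
variable {η τ : ℝ}

/-- custom mean value limit lemma -/
lemma hasDerivAt_of_near {f g : ℝ → ℝ} {a ρ : ℝ} (hρ : 0 < ρ)
    (hd : ∀ x, x ≠ a → |x - a| < ρ → HasDerivAt f (g x) x)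
    (hf : ContinuousAt f a) (hg : ContinuousAt g a) : HasDerivAt f (g a) a := by
  rw [hasDerivAt_iff_tendsto_slope]
  rw [Metric.tendsto_nhdsWithin_nhds]
  intro ε hε
  obtain ⟨δ₁, hδ₁, hgδ⟩ := Metric.continuousAt_iff.mp hg ε hε
  refine ⟨min ρ δ₁, lt_min hρ hδ₁, ?_⟩
  intro x hx hdist
  have hxa : x ≠ a := hx
  have hd1 : |x - a| < ρ := by
    rw [Real.dist_eq] at hdist; exact lt_of_lt_of_le hdist (min_le_left _ _)
  have hd2 : |x - a| < δ₁ := by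
    rw [Real.dist_eq] at hdist; exact lt_of_lt_of_le hdist (min_le_right _ _)
  rcases lt_or_gt_of_ne hxa with hlt | hgt
  · -- x < a
    have hcont : ContinuousOn f (Icc x a) := by
      intro t ht
      rcases eq_or_ne t a with rfl | hne
      · exact hf.continuousWithinAt
      · have : |t - a| < ρ := by
          rw [abs_sub_lt_iff] at hd1 ⊢
          constructor <;> [linarith [ht.2, ht.1, hd1.2]; linarith [ht.1, ht.2, hd1.2]]
        exact ((hd t hne this).continuousAt).continuousWithinAt
    have hderiv : ∀ t ∈ Ioo x a, HasDerivAt f (g t) t := by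
      intro t ht
      apply hd t (ne_of_lt ht.2)
      rw [abs_sub_lt_iff] at hd1 ⊢
      constructor <;> [linarith [ht.2]; linarith [ht.1, hd1.2]]
    obtain ⟨c, hc, hceq⟩ := exists_hasDerivAt_eq_slope f g hlt hcont hderiv
    have hslope : slope f a x = g c := by
      rw [slope_comm, slope_def_field, hceq]
    rw [hslope]
    apply hgδ
    rw [Real.dist_eq]
    have : |c - a| < δ₁ := by
      rw [abs_sub_lt_iff] at hd2 ⊢
      constructor <;> [linarith [hc.2]; linarith [hc.1, hd2.2]]
    exact this
  · -- a < x
    have hcont : ContinuousOn f (Icc a x) := by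
      intro t ht
      rcases eq_or_ne t a with rfl | hne
      · exact hf.continuousWithinAt
      · have : |t - a| < ρ := by
          rw [abs_sub_lt_iff] at hd1 ⊢
          constructor <;> [linarith [ht.2, hd1.1]; linarith [ht.1]]
        exact ((hd t hne this).continuousAt).continuousWithinAt
    have hderiv : ∀ t ∈ Ioo a x, HasDerivAt f (g t) t := by
      intro t ht
      apply hd t (ne_of_gt ht.1)
      rw [abs_sub_lt_iff] at hd1 ⊢
      constructor <;> [linarith [ht.2, hd1.1]; linarith [ht.1]]
    obtain ⟨c, hc, hceq⟩ := exists_hasDerivAt_eq_slope f g hgt hcont hderiv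
    have hslope : slope f a x = g c := by
      rw [slope_def_field, hceq]
    rw [hslope]
    apply hgδ
    rw [Real.dist_eq]
    rw [abs_sub_lt_iff] at hd2 ⊢
    constructor <;> [linarith [hc.2, hd2.1]; linarith [hc.1]]


variable (hη : 0 < η) (hτ0 : 0 < τ) (hτ1 : τ < 1)

include hη hτ0 hτ1

lemma Mu (m : ℤ) (δ : ℝ) (h0 : 0 ≤ δ) (h2 : δ < 2 * TT η τ) :
    Int.fract ((2 * m * TT η τ + δ) / (2 * TT η τ)) = δ / (2 * TT η τ) := by
  have hθ := TT_pos hη hτ0 hτ1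
  have h2θ : (0:ℝ) < 2 * TT η τ := by linarith
  have heq : (2 * m * TT η τ + δ) / (2 * TT η τ) = (m : ℝ) + δ / (2 * TT η τ) := by
    field_simp
  rw [heq, Int.fract_intCast_add]
  exact Int.fract_eq_self.2 ⟨by positivity, (div_lt_one h2θ).2 h2⟩

lemma Q1 (m : ℤ) (δ : ℝ) (h0 : 0 ≤ δ) (h1 : δ ≤ TT η τ) :
    qq η τ (2 * m * TT η τ + δ) = δ := by
  have hθ := TT_pos hη hτ0 hτ1
  unfold qq
  rw [Mu hη hτ0 hτ1 m δ h0 (by linarith)]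
  have hu : δ / (2 * TT η τ) ≤ 1/2 := by
    rw [div_le_iff₀ (by linarith)]; linarith
  rw [abs_of_nonpos (by linarith)]
  field_simp
  ring

lemma Q2 (m : ℤ) (δ : ℝ) (h0 : TT η τ ≤ δ) (h1 : δ ≤ 2 * TT η τ) :
    qq η τ (2 * m * TT η τ + δ) = 2 * TT η τ - δ := by
  have hθ := TT_pos hη hτ0 hτ1
  rcases eq_or_lt_of_le h1 with rfl | h2
  · have h := Q1 hη hτ0 hτ1 (m + 1) 0 le_rfl hθ.le
    have heq : 2 * ((m:ℤ) + 1 : ℤ) * TT η τ + (0:ℝ) = 2 * m * TT η τ + 2 * TT η τ := by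
      push_cast; ring
    rw [heq] at h
    rw [h]; ring
  · unfold qq
    rw [Mu hη hτ0 hτ1 m δ (by linarith) h2]
    have hu : 1/2 ≤ δ / (2 * TT η τ) := by
      rw [le_div_iff₀ (by linarith)]; linarith
    rw [abs_of_nonneg (by linarith)]
    field_simp
    ring

lemma qq_bounds : ∀ y, 0 ≤ qq η τ y ∧ qq η τ y ≤ TT η τ := by
  intro y
  have hθ := TT_pos hη hτ0 hτ1
  have h0 := Int.fract_nonneg (y / (2 * TT η τ))
  have h1 := Int.fract_lt_one (y / (2 * TT η τ))
  have habs : |2 * Int.fract (y / (2 * TT η τ)) - 1| ≤ 1 :=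
    abs_le.2 ⟨by linarith, by linarith⟩
  have habs0 := abs_nonneg (2 * Int.fract (y / (2 * TT η τ)) - 1)
  unfold qq
  constructor
  · apply mul_nonneg hθ.le; linarith
  · nlinarith [mul_nonneg hθ.le habs0]

lemma qq_per_int : ∀ (y : ℝ) (k : ℤ), qq η τ (y + 2 * TT η τ * k) = qq η τ y := by
  intro y k
  have hθ := TT_pos hη hτ0 hτ1
  unfold qq
  have heq : (y + 2 * TT η τ * k) / (2 * TT η τ) = y / (2 * TT η τ) + (k : ℝ) := by
    field_simp
  rw [heq, Int.fract_add_intCast]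

lemma qq_neg : ∀ y, qq η τ (-y) = qq η τ y := by
  intro y
  have hθ := TT_pos hη hτ0 hτ1
  unfold qq
  have hn : (-y) / (2 * TT η τ) = -(y / (2 * TT η τ)) := by ring
  rw [hn]
  rcases eq_or_ne (Int.fract (y / (2 * TT η τ))) 0 with h | h
  · rw [Int.fract_neg_eq_zero.2 h, h]
  · rw [Int.fract_neg h]
    congr 1
    rw [show 2 * (1 - Int.fract (y / (2 * TT η τ))) - 1
        = -(2 * Int.fract (y / (2 * TT η τ)) - 1) by ring, abs_neg]

lemma QL (k : ℤ) (d : ℝ) (hd : |d| ≤ TT η τ) :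
    qq η τ (k * TT η τ + d) = if Even k then |d| else TT η τ - |d| := by
  have hθ := TT_pos hη hτ0 hτ1
  obtain ⟨hd1, hd2⟩ := abs_le.1 hd
  rcases Int.even_or_odd k with ⟨m, hm⟩ | ⟨m, hm⟩
  · rw [if_pos ⟨m, hm⟩]
    have hk : (k : ℝ) * TT η τ + d = 2 * m * TT η τ + d := by
      rw [hm]; push_cast; ring
    rcases le_or_gt 0 d with h | h
    · rw [hk, Q1 hη hτ0 hτ1 m d h hd2, abs_of_nonneg h]
    · have hk2 : (k : ℝ) * TT η τ + d = 2 * ((m - 1 : ℤ) : ℝ) * TT η τ + (2 * TT η τ + d) := by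
        rw [hm]; push_cast; ring
      rw [hk2, Q2 hη hτ0 hτ1 (m-1) (2 * TT η τ + d) (by linarith) (by linarith), abs_of_neg h]
      ring
  · rw [if_neg (Int.not_even_iff_odd.mpr ⟨m, hm⟩)]
    have hk : (k : ℝ) * TT η τ + d = 2 * m * TT η τ + (TT η τ + d) := by
      rw [hm]; push_cast; ring
    rcases le_or_gt 0 d with h | h
    · rw [hk, Q2 hη hτ0 hτ1 m _ (by linarith) (by linarith), abs_of_nonneg h]
      ring
    · rw [hk, Q1 hη hτ0 hτ1 m _ (by linarith) (by linarith), abs_of_neg h]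
      ring

lemma eps_even (m : ℤ) (δ : ℝ) (h0 : 0 ≤ δ) (h1 : δ ≤ TT η τ) :
    eps η τ (2 * m * TT η τ + δ) = 1 := by
  have hθ := TT_pos hη hτ0 hτ1
  unfold eps
  rw [Mu hη hτ0 hτ1 m δ h0 (by linarith)]
  rw [if_pos (by rw [div_le_iff₀ (by linarith)]; linarith)]

lemma eps_odd (m : ℤ) (δ : ℝ) (h0 : TT η τ < δ) (h1 : δ < 2 * TT η τ) :
    eps η τ (2 * m * TT η τ + δ) = -1 := by
  have hθ := TT_pos hη hτ0 hτ1
  unfold eps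
  rw [Mu hη hτ0 hτ1 m δ (by linarith) h1]
  rw [if_neg (by rw [not_le, lt_div_iff₀ (by linarith)]; linarith)]

lemma zz_mem : ∀ y, 2/η ≤ zz η τ y ∧ zz η τ y ≤ 2/(η*τ^2) := by
  intro y
  obtain ⟨h0, h1⟩ := qq_bounds hη hτ0 hτ1 y
  constructor
  · rw [← zhat_zero hη hτ0 hτ1]
    exact (zhat_strictMono hη hτ0 hτ1).monotone h0
  · rw [← zhat_TT hη hτ0 hτ1]
    exact (zhat_strictMono hη hτ0 hτ1).monotone h1

lemma zz_even : ∀ y, zz η τ (-y) = zz η τ y := by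
  intro y; unfold zz; rw [qq_neg hη hτ0 hτ1]

lemma zz_periodic : Function.Periodic (zz η τ) (2 * TT η τ) := by
  intro y
  unfold zz
  have := qq_per_int hη hτ0 hτ1 y 1
  rw [Int.cast_one, mul_one] at this
  rw [this]

lemma zz_reflect : ∀ (k : ℤ) (y : ℝ), zz η τ (k * TT η τ + y) = zz η τ (k * TT η τ - y) := by
  intro k y
  unfold zz
  congr 1
  have h1 : (k:ℝ) * TT η τ + y = (y - k * TT η τ) + 2 * TT η τ * k := by ring
  have h2 : (k:ℝ) * TT η τ - y = -(y - k * TT η τ) := by ring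
  rw [h1, qq_per_int hη hτ0 hτ1, h2, qq_neg hη hτ0 hτ1]

lemma qq_zero : qq η τ 0 = 0 := by
  have h := Q1 hη hτ0 hτ1 0 0 le_rfl (TT_pos hη hτ0 hτ1).le
  simpa using h

lemma qq_Icc : ∀ t, 0 ≤ t → t ≤ TT η τ → qq η τ t = t := by
  intro t h0 h1
  have h := Q1 hη hτ0 hτ1 0 t h0 h1
  simpa using h

lemma zz_zero : zz η τ 0 = 2/η := by
  unfold zz; rw [qq_zero hη hτ0 hτ1, zhat_zero hη hτ0 hτ1]

lemma zz_TT : zz η τ (TT η τ) = 2/(η*τ^2) := by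
  unfold zz
  rw [qq_Icc hη hτ0 hτ1 _ (TT_pos hη hτ0 hτ1).le le_rfl, zhat_TT hη hτ0 hτ1]

lemma zz_strictMonoOn : StrictMonoOn (zz η τ) (Icc 0 (TT η τ)) := by
  intro x hx y hy hxy
  unfold zz
  rw [qq_Icc hη hτ0 hτ1 x hx.1 hx.2, qq_Icc hη hτ0 hτ1 y hy.1 hy.2]
  exact zhat_strictMono hη hτ0 hτ1 hxy

lemma pp_zz_nonneg : ∀ y, 0 ≤ pp η τ (zz η τ y) := by
  intro y
  obtain ⟨h0, h1⟩ := zz_mem hη hτ0 hτ1 y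
  exact pp_nonneg hη hτ0 h0 h1

lemma eps_pm : ∀ y, eps η τ y = 1 ∨ eps η τ y = -1 := by
  intro y; unfold eps; split
  · exact Or.inl rfl
  · exact Or.inr rfl

lemma energy : ∀ y, 4 * (zd η τ y) ^ 2 = pp η τ (zz η τ y) := by
  intro y
  have hnn := pp_zz_nonneg hη hτ0 hτ1 y
  unfold zd
  rcases eps_pm hη hτ0 hτ1 y with h | h <;> rw [h]
  · rw [one_mul, div_pow, Real.sq_sqrt hnn]; ring
  · rw [neg_one_mul, neg_div, neg_sq, div_pow, Real.sq_sqrt hnn]; ring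

lemma zd_zero : zd η τ 0 = 0 := by
  unfold zd
  rw [zz_zero hη hτ0 hτ1, pp_rootA, Real.sqrt_zero, mul_zero, zero_div]

lemma pp_zz_lattice : ∀ k : ℤ, pp η τ (zz η τ (k * TT η τ)) = 0 := by
  intro k
  have h := QL hη hτ0 hτ1 k 0 (by simpa using (TT_pos hη hτ0 hτ1).le)
  rw [add_zero] at h
  unfold zz
  rw [h]
  by_cases hk : Even k
  · rw [if_pos hk]; simp only [abs_zero]
    rw [zhat_zero hη hτ0 hτ1, pp_rootA]
  · rw [if_neg hk]; simp only [abs_zero, sub_zero]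
    rw [zhat_TT hη hτ0 hτ1, pp_rootC]

lemma zd_lattice : ∀ k : ℤ, zd η τ (k * TT η τ) = 0 := by
  intro k
  unfold zd
  rw [pp_zz_lattice hη hτ0 hτ1, Real.sqrt_zero, mul_zero, zero_div]

lemma zz_cont : Continuous (zz η τ) := by
  have hqc : Continuous (qq η τ) := by
    rw [continuous_iff_continuousAt]
    intro y
    have hθ := TT_pos hη hτ0 hτ1
    set k : ℤ := ⌊y / TT η τ⌋ with hk
    have hfl : (k:ℝ) ≤ y / TT η τ := Int.floor_le _
    have hfl2 : y / TT η τ < k + 1 := Int.lt_floor_add_one _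
    have h1 : (k:ℝ) * TT η τ ≤ y := (le_div_iff₀ hθ).1 hfl
    have h2 : y < ((k:ℝ) + 1) * TT η τ := by
      have := (div_lt_iff₀ hθ).1 hfl2
      linarith
    have hmem : |y - k * TT η τ| < TT η τ := by
      rw [abs_lt]; constructor <;> nlinarith
    have hU : {y' : ℝ | |y' - k * TT η τ| < TT η τ} ∈ nhds y := by
      have : IsOpen {y' : ℝ | |y' - k * TT η τ| < TT η τ} :=
        isOpen_lt (by fun_prop) continuous_const
      exact this.mem_nhds hmem
    have hev : qq η τ =ᶠ[nhds y]
        (fun y' => if Even k then |y' - k * TT η τ| else TT η τ - |y' - k * TT η τ|) := by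
      filter_upwards [hU] with y' hy'
      have := QL hη hτ0 hτ1 k (y' - k * TT η τ) (le_of_lt hy')
      rw [show (k:ℝ) * TT η τ + (y' - k * TT η τ) = y' by ring] at this
      exact this
    apply ContinuousAt.congr _ hev.symm
    by_cases hkev : Even k
    · simp only [if_pos hkev]; fun_prop
    · simp only [if_neg hkev]; fun_prop
  exact (zhat_cont hη hτ0 hτ1).comp hqc

lemma zd_contAt_lattice : ∀ k : ℤ, ContinuousAt (zd η τ) (k * TT η τ) := by
  intro k
  have hb : ∀ y', ‖zd η τ y'‖ ≤ Real.sqrt (pp η τ (zz η τ y')) / 2 := by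
    intro y'
    unfold zd
    rw [Real.norm_eq_abs, abs_div, abs_mul]
    rw [abs_of_nonneg (Real.sqrt_nonneg _)]
    have he : |eps η τ y'| = 1 := by
      rcases eps_pm hη hτ0 hτ1 y' with h | h <;> rw [h] <;> norm_num
    rw [he, one_mul]
    norm_num
  have hcont : ContinuousAt (fun y' => Real.sqrt (pp η τ (zz η τ y')) / 2) (k * TT η τ) := by
    apply ContinuousAt.div_const
    exact (Real.continuous_sqrt.comp ((pp_cont (η := η) (τ := τ)).comp
      (zz_cont hη hτ0 hτ1))).continuousAt
  have hval : Real.sqrt (pp η τ (zz η τ (k * TT η τ))) / 2 = 0 := by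
    rw [pp_zz_lattice hη hτ0 hτ1, Real.sqrt_zero, zero_div]
  have htend : Filter.Tendsto (fun y' => Real.sqrt (pp η τ (zz η τ y')) / 2)
      (nhds (k * TT η τ)) (nhds 0) := by
    rw [← hval]; exact hcont
  have := squeeze_zero_norm hb htend
  unfold ContinuousAt
  rw [zd_lattice hη hτ0 hτ1]
  exact this

lemma deriv_branch_even (m : ℤ) (δ : ℝ) (h0 : 0 < δ) (h1 : δ < TT η τ) :
    HasDerivAt (zz η τ) (zd η τ (2 * m * TT η τ + δ)) (2 * m * TT η τ + δ) ∧
    HasDerivAt (zd η τ) (ppd η τ (zz η τ (2 * m * TT η τ + δ)) / 8) (2 * m * TT η τ + δ) := by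
  have hθ := TT_pos hη hτ0 hτ1
  set y : ℝ := 2 * m * TT η τ + δ with hy
  have hU : {y' : ℝ | 2 * (m:ℝ) * TT η τ < y' ∧ y' < 2 * m * TT η τ + TT η τ} ∈ nhds y := by
    have : IsOpen {y' : ℝ | 2 * (m:ℝ) * TT η τ < y' ∧ y' < 2 * m * TT η τ + TT η τ} := by
      apply IsOpen.inter (isOpen_lt continuous_const continuous_id)
        (isOpen_lt continuous_id continuous_const)
    exact this.mem_nhds ⟨by rw [hy]; linarith, by rw [hy]; linarith⟩
  have hqq' : ∀ y' ∈ {y' : ℝ | 2 * (m:ℝ) * TT η τ < y' ∧ y' < 2 * m * TT η τ + TT η τ},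
      qq η τ y' = y' - 2 * m * TT η τ := by
    intro y' hy'
    have := Q1 hη hτ0 hτ1 m (y' - 2 * m * TT η τ) (by linarith [hy'.1]) (by linarith [hy'.2])
    rw [show 2 * (m:ℝ) * TT η τ + (y' - 2 * m * TT η τ) = y' by ring] at this
    exact this
  have hqy : qq η τ y = δ := by
    have := hqq' y ⟨by rw [hy]; linarith, by rw [hy]; linarith⟩
    rw [hy] at this ⊢
    rw [this]; ring
  have hzzy : zz η τ y = zhat η τ δ := by unfold zz; rw [hqy]
  have hz_ev : zz η τ =ᶠ[nhds y] (fun y' => zhat η τ (y' - 2 * m * TT η τ)) := by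
    filter_upwards [hU] with y' hy'
    unfold zz; rw [hqq' y' hy']
  have hzhat := zhat_deriv hη hτ0 hτ1 δ h0 h1
  have hinner : HasDerivAt (fun y' : ℝ => y' - 2 * m * TT η τ) 1 y :=
    (hasDerivAt_id y).sub_const _
  have harg : y - 2 * (m:ℝ) * TT η τ = δ := by rw [hy]; ring
  have hcomp : HasDerivAt (fun y' : ℝ => zhat η τ (y' - 2 * m * TT η τ))
      (Real.sqrt (pp η τ (zhat η τ δ)) / 2) y := by
    have := HasDerivAt.comp y (by rw [harg]; exact hzhat) hinner
    rw [mul_one] at this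
    exact this
  have h1st : HasDerivAt (zz η τ) (zd η τ y) y := by
    have heps : eps η τ y = 1 := by
      have := eps_even hη hτ0 hτ1 m δ h0.le h1.le
      rw [← hy] at this; exact this
    have hval : zd η τ y = Real.sqrt (pp η τ (zhat η τ δ)) / 2 := by
      unfold zd; rw [heps, hzzy, one_mul]
    rw [hval]
    exact hcomp.congr_of_eventuallyEq hz_ev
  refine ⟨h1st, ?_⟩
  -- second derivative
  have hApos : 2/η < zhat η τ δ := by
    rw [← zhat_zero hη hτ0 hτ1]; exact zhat_strictMono hη hτ0 hτ1 h0
  have hCpos : zhat η τ δ < 2/(η*τ^2) := by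
    rw [← zhat_TT hη hτ0 hτ1]; exact zhat_strictMono hη hτ0 hτ1 h1
  have hppos : 0 < pp η τ (zz η τ y) := by rw [hzzy]; exact pp_pos hη hτ0 hApos hCpos
  have hsne : Real.sqrt (pp η τ (zz η τ y)) ≠ 0 := (Real.sqrt_pos.2 hppos).ne'
  have hzd_ev : zd η τ =ᶠ[nhds y] (fun y' => Real.sqrt (pp η τ (zz η τ y')) / 2) := by
    filter_upwards [hU] with y' hy'
    have heps : eps η τ y' = 1 := by
      have := eps_even hη hτ0 hτ1 m (y' - 2 * m * TT η τ) (by linarith [hy'.1])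
        (by linarith [hy'.2])
      rw [show 2 * (m:ℝ) * TT η τ + (y' - 2 * m * TT η τ) = y' by ring] at this
      exact this
    unfold zd; rw [heps, one_mul]
  have hppzz : HasDerivAt (fun y' => pp η τ (zz η τ y'))
      (ppd η τ (zz η τ y) * zd η τ y) y :=
    HasDerivAt.comp y (pp_hasDeriv (zz η τ y)) h1st
  have hsq := (Real.hasDerivAt_sqrt hppos.ne').comp y hppzz
  have hW := hsq.div_const 2
  have hzdval : zd η τ y = Real.sqrt (pp η τ (zz η τ y)) / 2 := by
    have heps : eps η τ y = 1 := by
      have := eps_even hη hτ0 hτ1 m δ h0.le h1.le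
      rw [← hy] at this; exact this
    unfold zd; rw [heps, one_mul]
  have hvale : 1 / (2 * Real.sqrt (pp η τ (zz η τ y))) * (ppd η τ (zz η τ y) * zd η τ y) / 2
      = ppd η τ (zz η τ y) / 8 := by
    rw [hzdval]
    field_simp
    ring
  rw [← hvale]
  exact hW.congr_of_eventuallyEq hzd_ev

lemma deriv_branch_odd (m : ℤ) (δ : ℝ) (h0 : TT η τ < δ) (h1 : δ < 2 * TT η τ) :
    HasDerivAt (zz η τ) (zd η τ (2 * m * TT η τ + δ)) (2 * m * TT η τ + δ) ∧
    HasDerivAt (zd η τ) (ppd η τ (zz η τ (2 * m * TT η τ + δ)) / 8) (2 * m * TT η τ + δ) := by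
  have hθ := TT_pos hη hτ0 hτ1
  set y : ℝ := 2 * m * TT η τ + δ with hy
  set t : ℝ := 2 * TT η τ - δ with ht
  have ht0 : 0 < t := by rw [ht]; linarith
  have htT : t < TT η τ := by rw [ht]; linarith
  have hU : {y' : ℝ | 2 * (m:ℝ) * TT η τ + TT η τ < y' ∧ y' < 2 * m * TT η τ + 2 * TT η τ}
      ∈ nhds y := by
    have : IsOpen {y' : ℝ | 2 * (m:ℝ) * TT η τ + TT η τ < y' ∧
        y' < 2 * m * TT η τ + 2 * TT η τ} :=
      IsOpen.inter (isOpen_lt continuous_const continuous_id)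
        (isOpen_lt continuous_id continuous_const)
    exact this.mem_nhds ⟨by rw [hy]; linarith, by rw [hy]; linarith⟩
  have hqq' : ∀ y' ∈ {y' : ℝ | 2 * (m:ℝ) * TT η τ + TT η τ < y' ∧
      y' < 2 * m * TT η τ + 2 * TT η τ},
      qq η τ y' = 2 * m * TT η τ + 2 * TT η τ - y' := by
    intro y' hy'
    have := Q2 hη hτ0 hτ1 m (y' - 2 * m * TT η τ) (by linarith [hy'.1]) (by linarith [hy'.2])
    rw [show 2 * (m:ℝ) * TT η τ + (y' - 2 * m * TT η τ) = y' by ring] at this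
    rw [this]; ring
  have hqy : qq η τ y = t := by
    have := hqq' y ⟨by rw [hy]; linarith, by rw [hy]; linarith⟩
    rw [this, hy, ht]; ring
  have hzzy : zz η τ y = zhat η τ t := by unfold zz; rw [hqy]
  have hz_ev : zz η τ =ᶠ[nhds y]
      (fun y' => zhat η τ (2 * m * TT η τ + 2 * TT η τ - y')) := by
    filter_upwards [hU] with y' hy'
    unfold zz; rw [hqq' y' hy']
  have hzhat := zhat_deriv hη hτ0 hτ1 t ht0 htT
  have hinner : HasDerivAt (fun y' : ℝ => 2 * m * TT η τ + 2 * TT η τ - y') (-1) y := by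
    simpa using (hasDerivAt_id y).const_sub (2 * (m:ℝ) * TT η τ + 2 * TT η τ)
  have harg : 2 * (m:ℝ) * TT η τ + 2 * TT η τ - y = t := by rw [hy, ht]; ring
  have hcomp : HasDerivAt (fun y' : ℝ => zhat η τ (2 * m * TT η τ + 2 * TT η τ - y'))
      (-(Real.sqrt (pp η τ (zhat η τ t)) / 2)) y := by
    have := HasDerivAt.comp y (by rw [harg]; exact hzhat) hinner
    rw [mul_neg_one] at this
    exact this
  have hepsy : eps η τ y = -1 := by
    have := eps_odd hη hτ0 hτ1 m δ h0 h1
    rw [← hy] at this; exact this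
  have h1st : HasDerivAt (zz η τ) (zd η τ y) y := by
    have hval : zd η τ y = -(Real.sqrt (pp η τ (zhat η τ t)) / 2) := by
      unfold zd; rw [hepsy, hzzy]; ring
    rw [hval]
    exact hcomp.congr_of_eventuallyEq hz_ev
  refine ⟨h1st, ?_⟩
  have hApos : 2/η < zhat η τ t := by
    rw [← zhat_zero hη hτ0 hτ1]; exact zhat_strictMono hη hτ0 hτ1 ht0
  have hCpos : zhat η τ t < 2/(η*τ^2) := by
    rw [← zhat_TT hη hτ0 hτ1]; exact zhat_strictMono hη hτ0 hτ1 htT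
  have hppos : 0 < pp η τ (zz η τ y) := by rw [hzzy]; exact pp_pos hη hτ0 hApos hCpos
  have hsne : Real.sqrt (pp η τ (zz η τ y)) ≠ 0 := (Real.sqrt_pos.2 hppos).ne'
  have hzd_ev : zd η τ =ᶠ[nhds y] (fun y' => -(Real.sqrt (pp η τ (zz η τ y')) / 2)) := by
    filter_upwards [hU] with y' hy'
    have heps : eps η τ y' = -1 := by
      have := eps_odd hη hτ0 hτ1 m (y' - 2 * m * TT η τ) (by linarith [hy'.1])
        (by linarith [hy'.2])
      rw [show 2 * (m:ℝ) * TT η τ + (y' - 2 * m * TT η τ) = y' by ring] at this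
      exact this
    unfold zd; rw [heps]; ring
  have hppzz : HasDerivAt (fun y' => pp η τ (zz η τ y'))
      (ppd η τ (zz η τ y) * zd η τ y) y :=
    HasDerivAt.comp y (pp_hasDeriv (zz η τ y)) h1st
  have hsq := (Real.hasDerivAt_sqrt hppos.ne').comp y hppzz
  have hW := (hsq.div_const 2).neg
  have hzdval : zd η τ y = -(Real.sqrt (pp η τ (zz η τ y)) / 2) := by
    unfold zd; rw [hepsy]; ring
  have hvale : -(1 / (2 * Real.sqrt (pp η τ (zz η τ y))) * (ppd η τ (zz η τ y) * zd η τ y) / 2)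
      = ppd η τ (zz η τ y) / 8 := by
    rw [hzdval]
    field_simp
    ring
  rw [← hvale]
  exact hW.congr_of_eventuallyEq hzd_ev

lemma classify : ∀ y : ℝ, (∃ k : ℤ, y = k * TT η τ) ∨
    (∃ (m : ℤ) (δ : ℝ), ((0 < δ ∧ δ < TT η τ) ∨ (TT η τ < δ ∧ δ < 2 * TT η τ)) ∧
      y = 2 * m * TT η τ + δ) := by
  intro y
  have hθ := TT_pos hη hτ0 hτ1
  set n : ℤ := ⌊y / TT η τ⌋ with hn
  have hfl : (n:ℝ) ≤ y / TT η τ := Int.floor_le _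
  have hfl2 : y / TT η τ < n + 1 := Int.lt_floor_add_one _
  have h1 : (n:ℝ) * TT η τ ≤ y := (le_div_iff₀ hθ).1 hfl
  have h2 : y < ((n:ℝ) + 1) * TT η τ := by
    have := (div_lt_iff₀ hθ).1 hfl2
    linarith
  set r : ℝ := y - n * TT η τ with hr
  have hr0 : 0 ≤ r := by rw [hr]; linarith
  have hr1 : r < TT η τ := by rw [hr]; nlinarith
  rcases eq_or_lt_of_le hr0 with heq | hpos
  · exact Or.inl ⟨n, by rw [hr] at heq; linarith⟩
  · rcases Int.even_or_odd n with ⟨m, hm⟩ | ⟨m, hm⟩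
    · refine Or.inr ⟨m, r, Or.inl ⟨hpos, hr1⟩, ?_⟩
      rw [hr, hm]; push_cast; ring
    · refine Or.inr ⟨m, TT η τ + r, Or.inr ⟨by linarith, by linarith⟩, ?_⟩
      rw [hr, hm]; push_cast; ring

lemma deriv_all : ∀ y : ℝ, HasDerivAt (zz η τ) (zd η τ y) y ∧
    HasDerivAt (zd η τ) (ppd η τ (zz η τ y) / 8) y := by
  have hθ := TT_pos hη hτ0 hτ1
  have nonlattice : ∀ y : ℝ, (∃ (m : ℤ) (δ : ℝ),
      ((0 < δ ∧ δ < TT η τ) ∨ (TT η τ < δ ∧ δ < 2 * TT η τ)) ∧ y = 2 * m * TT η τ + δ) →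
      HasDerivAt (zz η τ) (zd η τ y) y ∧
      HasDerivAt (zd η τ) (ppd η τ (zz η τ y) / 8) y := by
    rintro y ⟨m, δ, hcase, rfl⟩
    rcases hcase with ⟨ha, hb⟩ | ⟨ha, hb⟩
    · exact deriv_branch_even hη hτ0 hτ1 m δ ha hb
    · exact deriv_branch_odd hη hτ0 hτ1 m δ ha hb
  intro y
  rcases classify hη hτ0 hτ1 y with ⟨k, rfl⟩ | hnl
  · -- lattice point
    have hd : ∀ x : ℝ, x ≠ k * TT η τ → |x - k * TT η τ| < TT η τ →
        HasDerivAt (zz η τ) (zd η τ x) x ∧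
        HasDerivAt (zd η τ) (ppd η τ (zz η τ x) / 8) x := by
      intro x hne hdist
      rcases classify hη hτ0 hτ1 x with ⟨j, hj⟩ | hnl
      · exfalso
        have hjk : j ≠ k := by
          rintro rfl; exact hne hj
        have : |x - k * TT η τ| = |((j - k : ℤ) : ℝ)| * TT η τ := by
          rw [hj, show (j:ℝ) * TT η τ - k * TT η τ = ((j - k : ℤ) : ℝ) * TT η τ by
            push_cast; ring, abs_mul, abs_of_pos hθ]
        have hone : (1:ℝ) ≤ |((j - k : ℤ) : ℝ)| := by
          rw [← Int.cast_abs]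
          exact_mod_cast Int.one_le_abs (sub_ne_zero.2 hjk)
        nlinarith
      · exact nonlattice x hnl
    constructor
    · exact hasDerivAt_of_near hθ (fun x hx hd' => (hd x hx hd').1)
        (zz_cont hη hτ0 hτ1).continuousAt (zd_contAt_lattice hη hτ0 hτ1 k)
    · have hgc : ContinuousAt (fun x => ppd η τ (zz η τ x) / 8) (k * TT η τ) :=
        (((ppd_cont (η := η) (τ := τ)).comp (zz_cont hη hτ0 hτ1)).div_const 8).continuousAt
      exact hasDerivAt_of_near hθ (fun x hx hd' => (hd x hx hd').2)
        (zd_contAt_lattice hη hτ0 hτ1 k) hgc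
  · exact nonlattice y hnl
end
end CFODE

open CFODE in
/-- Properties of the solution `z(y)` of `8z'' = p'(z)`, `z(0) = 2/η`, `z'(0) = 0`, where
`p(s) = −(ητ²/2)(s − 2/(ητ²))(s − 2/η)(s + 2η)`: it is globally defined, satisfies
`4z'² = p(z)`, oscillates in `[2/η, 2/(ητ²)]`, is even, strictly increasing on `[0,ϑ]`
with `ϑ = ∫ 2/√p`, symmetric about every `kϑ`, and `2ϑ`-periodic. -/
theorem conformal_factor_ode_properties
    (η τ : ℝ) (hη : 0 < η) (hτ0 : 0 < τ) (hτ1 : τ < 1)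
    (p : ℝ → ℝ)
    (hp : p = fun s => -(η * τ ^ 2 / 2) * (s - 2 / (η * τ ^ 2)) * (s - 2 / η) * (s + 2 * η))
    (ϑ : ℝ)
    (hϑ : ϑ = ∫ s in (2 / η)..(2 / (η * τ ^ 2)), 2 / Real.sqrt (p s)) :
    ∃ z z' : ℝ → ℝ,
      (∀ y, HasDerivAt z (z' y) y) ∧
      (∀ y, HasDerivAt z' (deriv p (z y) / 8) y) ∧
      z 0 = 2 / η ∧ z' 0 = 0 ∧
      (∀ y, 4 * (z' y) ^ 2 = p (z y)) ∧
      (∀ y, 2 / η ≤ z y ∧ z y ≤ 2 / (η * τ ^ 2)) ∧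
      (∀ y, z (-y) = z y) ∧
      IntervalIntegrable (fun s => 2 / Real.sqrt (p s)) volume (2 / η) (2 / (η * τ ^ 2)) ∧
      0 < ϑ ∧
      StrictMonoOn z (Icc 0 ϑ) ∧
      z ϑ = 2 / (η * τ ^ 2) ∧
      (∀ (k : ℤ) (y : ℝ), z (k * ϑ + y) = z (k * ϑ - y)) ∧
      Function.Periodic z (2 * ϑ) := by
  have hp2 : p = pp η τ := hp.trans rfl
  subst hp2
  have hT : ϑ = TT η τ := hϑ.trans (TT_eq hη hτ0 hτ1).symm
  subst hT
  refine ⟨zz η τ, zd η τ, fun y => (deriv_all hη hτ0 hτ1 y).1, ?_,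
    zz_zero hη hτ0 hτ1, zd_zero hη hτ0 hτ1, energy hη hτ0 hτ1, zz_mem hη hτ0 hτ1,
    zz_even hη hτ0 hτ1, f0_intInt hη hτ0 hτ1, TT_pos hη hτ0 hτ1,
    zz_strictMonoOn hη hτ0 hτ1, zz_TT hη hτ0 hτ1, zz_reflect hη hτ0 hτ1,
    zz_periodic hη hτ0 hτ1⟩
  intro y
  have hdp : deriv (pp η τ) (zz η τ y) = ppd η τ (zz η τ y) :=
    (pp_hasDeriv (zz η τ y)).deriv
  rw [hdp]
  exact (deriv_all hη hτ0 hτ1 y).2
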